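/- Let k ≥ 1 be an integer, let G be a k-tree, and let K be any k-clique of G. Then G admits a k-simplicial ordering whose basis is K, i.e., whose first k vertices are exactly the vertices of K. -/

import Mathlib

open SimpleGraph

/-- The set of neighbors of `e i` among the earlier vertices `e j`, `j < i`. -/
def earlierNbrs {V : Type} (G : SimpleGraph V) {p : ℕ} (e : Fin p ≃ V) (i : Fin p) : Set V :=
  {v | ∃ j : Fin p, j < i ∧ v = e j ∧ G.Adj (e i) v}

/-- `e` is a `k`-simplicial ordering of the vertices of `G`. -/
def IsKSimplicialOrdering {V : Type} [Fintype V] (k : ℕ) (G : SimpleGraph V)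
    (e : Fin (Fintype.card V) ≃ V) : Prop :=
  G.IsClique (⇑e '' {i | (i : ℕ) < k}) ∧
  ∀ i : Fin (Fintype.card V), k ≤ (i : ℕ) →
    G.IsClique (earlierNbrs G e i) ∧ (earlierNbrs G e i).ncard = k

/-- A `k`-tree is a graph on at least `k` vertices admitting a `k`-simplicial ordering. -/
def IsKTree {V : Type} [Fintype V] (k : ℕ) (G : SimpleGraph V) : Prop :=
  k ≤ Fintype.card V ∧ ∃ e : Fin (Fintype.card V) ≃ V, IsKSimplicialOrdering k G e

namespace KTreeAux

variable {V : Type}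

/-- generalized k-simplicial ordering predicate (same body, arbitrary `p`) -/
def KSO (k : ℕ) (G : SimpleGraph V) {p : ℕ} (e : Fin p ≃ V) : Prop :=
  G.IsClique (⇑e '' {i | (i : ℕ) < k}) ∧
  ∀ i : Fin p, k ≤ (i : ℕ) →
    G.IsClique (earlierNbrs G e i) ∧ (earlierNbrs G e i).ncard = k

lemma mem_earlierNbrs {G : SimpleGraph V} {p} {e : Fin p ≃ V} {i : Fin p} {v : V} :
    v ∈ earlierNbrs G e i ↔ ∃ j : Fin p, j < i ∧ v = e j ∧ G.Adj (e i) v := Iff.rfl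

lemma isClique_comap_iff {x : V} (G : SimpleGraph V) (A : Set {y : V // y ≠ x}) :
    (G.comap (Subtype.val : {y : V // y ≠ x} → V)).IsClique A ↔
      G.IsClique (Subtype.val '' A) := by
  constructor
  · rintro h v ⟨a, ha, rfl⟩ w ⟨b, hb, rfl⟩ hne
    exact h ha hb (fun hab => hne (by rw [hab]))
  · intro h a ha b hb hne
    exact h ⟨a, ha, rfl⟩ ⟨b, hb, rfl⟩ (fun hab => hne (Subtype.ext hab))

lemma earlier_last {n : ℕ} (G : SimpleGraph V) (e : Fin (n+1) ≃ V) :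
    earlierNbrs G e (Fin.last n) = G.neighborSet (e (Fin.last n)) := by
  ext v
  constructor
  · rintro ⟨j, _, rfl, h⟩; exact h
  · intro h
    refine ⟨e.symm v, ?_, (e.apply_symm_apply v).symm, by simpa using h⟩
    have hne : e.symm v ≠ Fin.last n := by
      intro hv
      have hv2 : v = e (Fin.last n) := by rw [← hv, e.apply_symm_apply]
      exact G.irrefl (hv2 ▸ h)
    exact lt_of_le_of_ne (Fin.le_last _) hne

lemma KSO_perm {p k : ℕ} {G : SimpleGraph V} {e : Fin p ≃ V} (h : KSO k G e)
    (σ : Equiv.Perm (Fin p)) (hσ : ∀ j : Fin p, k ≤ (j : ℕ) → σ j = j) :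
    KSO k G (σ.trans e) ∧ ⇑(σ.trans e) '' {i | (i : ℕ) < k} = ⇑e '' {i | (i : ℕ) < k} := by
  have hσ' : ∀ j : Fin p, (j : ℕ) < k → ((σ j : Fin p) : ℕ) < k := by
    intro j hj
    by_contra hc
    push_neg at hc
    have h1 : σ (σ j) = σ j := hσ _ hc
    have h2 := σ.injective h1
    rw [h2] at hc; omega
  have hσinv : ∀ j : Fin p, k ≤ (j : ℕ) → σ.symm j = j := by
    intro j hj
    have := hσ j hj
    rw [← this, σ.symm_apply_apply, this]
  have himg : σ '' {i : Fin p | (i : ℕ) < k} = {i : Fin p | (i : ℕ) < k} := by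
    apply Set.Subset.antisymm
    · rintro i ⟨j, hj, rfl⟩; exact hσ' j hj
    · intro i hi
      refine ⟨σ.symm i, ?_, σ.apply_symm_apply i⟩
      by_contra hc
      simp only [Set.mem_setOf_eq, not_lt] at hc
      have h2 := hσ _ hc
      rw [σ.apply_symm_apply] at h2
      rw [← h2] at hc
      exact absurd hi (by simp; omega)
  have hset : ∀ i : Fin p, k ≤ (i : ℕ) →
      earlierNbrs G (σ.trans e) i = earlierNbrs G e i := by
    intro i hi
    have hei : (σ.trans e) i = e i := by simp [hσ i hi]
    ext v
    simp only [mem_earlierNbrs, hei]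
    constructor
    · rintro ⟨j, hj, rfl, hadj⟩
      refine ⟨σ j, ?_, rfl, hadj⟩
      rcases lt_or_ge (j : ℕ) k with hjk | hjk
      · have h2 := hσ' j hjk
        rw [Fin.lt_def]; omega
      · rw [hσ j hjk]; exact hj
    · rintro ⟨j, hj, rfl, hadj⟩
      refine ⟨σ.symm j, ?_, by simp, hadj⟩
      rcases lt_or_ge ((σ.symm j : Fin p) : ℕ) k with hjk | hjk
      · rw [Fin.lt_def]; omega
      · have h2 := hσ _ hjk
        rw [σ.apply_symm_apply] at h2
        rw [← h2]; exact hj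
  constructor
  · constructor
    · have : ⇑(σ.trans e) '' {i : Fin p | (i : ℕ) < k} = ⇑e '' {i | (i : ℕ) < k} := by
        rw [show ⇑(σ.trans e) = ⇑e ∘ ⇑σ from rfl, Set.image_comp, himg]
      rw [this]; exact h.1
    · intro i hi
      rw [hset i hi]
      exact h.2 i hi
  · rw [show ⇑(σ.trans e) = ⇑e ∘ ⇑σ from rfl, Set.image_comp, himg]


/-- insert `x` at position `m` into an ordering of the remaining vertices -/
noncomputable def glue {n : ℕ} (x : V) (m : Fin (n+1)) (e1 : Fin n ≃ {y : V // y ≠ x}) :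
    Fin (n+1) ≃ V :=
  letI := Classical.decEq V
  (finSuccEquiv' m).trans (e1.optionCongr.trans (Equiv.optionSubtypeNe x))

@[simp] lemma glue_at {n : ℕ} (x : V) (m : Fin (n+1)) (e1 : Fin n ≃ {y : V // y ≠ x}) :
    glue x m e1 m = x := by
  simp [glue, finSuccEquiv'_at]

@[simp] lemma glue_succAbove {n : ℕ} (x : V) (m : Fin (n+1)) (e1 : Fin n ≃ {y : V // y ≠ x})
    (j : Fin n) : glue x m e1 (m.succAbove j) = ↑(e1 j) := by
  simp [glue, finSuccEquiv'_succAbove]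

lemma glue_earlier_core {n : ℕ} (G : SimpleGraph V) (x : V) (m : Fin (n+1))
    (e1 : Fin n ≃ {y : V // y ≠ x}) (j : Fin n) :
    earlierNbrs G (glue x m e1) (m.succAbove j) =
      (Subtype.val '' earlierNbrs (G.comap (Subtype.val : {y : V // y ≠ x} → V)) e1 j) ∪
      {v | v = x ∧ m < m.succAbove j ∧ G.Adj ↑(e1 j) x} := by
  ext v
  constructor
  · rintro ⟨i, hlt, rfl, hadj⟩
    rcases eq_or_ne i m with rfl | hne
    · right
      exact ⟨glue_at x i e1, hlt, by rwa [glue_succAbove, glue_at] at hadj⟩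
    · obtain ⟨j', rfl⟩ := Fin.exists_succAbove_eq hne
      left
      refine ⟨e1 j', ⟨j', ?_, rfl, ?_⟩, by rw [glue_succAbove]⟩
      · exact (Fin.strictMono_succAbove m).lt_iff_lt.mp hlt
      · simpa using hadj
  · rintro (⟨w, ⟨j', hlt, rfl, hadj⟩, rfl⟩ | ⟨hvx, hm, hadj⟩)
    · refine ⟨m.succAbove j', (Fin.strictMono_succAbove m) hlt, by rw [glue_succAbove], ?_⟩
      simpa using hadj
    · refine ⟨m, hm, by rw [hvx, glue_at], ?_⟩
      rw [glue_succAbove, hvx]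
      exact hadj


lemma glue_earlier_of_not {n : ℕ} (G : SimpleGraph V) (x : V) (m : Fin (n+1))
    (e1 : Fin n ≃ {y : V // y ≠ x}) (j : Fin n)
    (h : ¬ (m < m.succAbove j ∧ G.Adj ↑(e1 j) x)) :
    earlierNbrs G (glue x m e1) (m.succAbove j) =
      Subtype.val '' earlierNbrs (G.comap (Subtype.val : {y : V // y ≠ x} → V)) e1 j := by
  rw [glue_earlier_core]
  have : {v | v = x ∧ m < m.succAbove j ∧ G.Adj ↑(e1 j) x} = (∅ : Set V) := by
    ext v; simp only [Set.mem_setOf_eq, Set.mem_empty_iff_false, iff_false]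
    rintro ⟨rfl, h1, h2⟩; exact h ⟨h1, h2⟩
  rw [this, Set.union_empty]

lemma glue_earlier_of {n : ℕ} (G : SimpleGraph V) (x : V) (m : Fin (n+1))
    (e1 : Fin n ≃ {y : V // y ≠ x}) (j : Fin n)
    (h1 : m < m.succAbove j) (h2 : G.Adj ↑(e1 j) x) :
    earlierNbrs G (glue x m e1) (m.succAbove j) =
      insert x (Subtype.val '' earlierNbrs (G.comap (Subtype.val : {y : V // y ≠ x} → V)) e1 j) := by
  rw [glue_earlier_core]
  have : {v | v = x ∧ m < m.succAbove j ∧ G.Adj ↑(e1 j) x} = ({x} : Set V) := by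
    ext v; simp only [Set.mem_setOf_eq, Set.mem_singleton_iff]
    exact ⟨fun h => h.1, fun h => ⟨h, h1, h2⟩⟩
  rw [this, Set.union_singleton]


/-- drop the last vertex of an ordering -/
def restrict {n : ℕ} (e0 : Fin (n+1) ≃ V) : Fin n ≃ {y : V // y ≠ e0 (Fin.last n)} where
  toFun j := ⟨e0 j.castSucc, fun h => (Fin.castSucc_lt_last j).ne (e0.injective h)⟩
  invFun y := (e0.symm ↑y).castPred (fun h => y.2 (by rw [← e0.apply_symm_apply ↑y, h]))
  left_inv j := by simp
  right_inv y := by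
    ext
    simp [Fin.castSucc_castPred]

@[simp] lemma restrict_coe {n : ℕ} (e0 : Fin (n+1) ≃ V) (j : Fin n) :
    (restrict e0 j : V) = e0 j.castSucc := rfl

lemma restrict_earlier {n : ℕ} (G : SimpleGraph V) (e0 : Fin (n+1) ≃ V) (j : Fin n) :
    Subtype.val '' earlierNbrs
        (G.comap (Subtype.val : {y : V // y ≠ e0 (Fin.last n)} → V)) (restrict e0) j =
      earlierNbrs G e0 j.castSucc := by
  ext v
  constructor
  · rintro ⟨w, ⟨j', hlt, rfl, hadj⟩, rfl⟩
    exact ⟨j'.castSucc, Fin.castSucc_lt_castSucc_iff.2 hlt, rfl, hadj⟩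
  · rintro ⟨i, hlt, rfl, hadj⟩
    have hne : i ≠ Fin.last n := ne_of_lt (lt_of_lt_of_le hlt (Fin.le_last _))
    have hvx : e0 i ≠ e0 (Fin.last n) := fun h => hne (e0.injective h)
    refine ⟨⟨e0 i, hvx⟩, ⟨i.castPred hne, ?_, ?_, ?_⟩, rfl⟩
    · rw [← Fin.castSucc_lt_castSucc_iff, Fin.castSucc_castPred]
      exact hlt
    · ext; simp [Fin.castSucc_castPred]
    · show G.Adj (e0 j.castSucc) (e0 i)
      exact hadj

lemma KSO_restrict {n k : ℕ} {G : SimpleGraph V} {e0 : Fin (n+1) ≃ V}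
    (h : KSO k G e0) (hkn : k ≤ n) :
    KSO k (G.comap (Subtype.val : {y : V // y ≠ e0 (Fin.last n)} → V)) (restrict e0) := by
  constructor
  · rw [isClique_comap_iff]
    have himg : Subtype.val '' (⇑(restrict e0) '' {j : Fin n | (j : ℕ) < k}) =
        ⇑e0 '' {i : Fin (n+1) | (i : ℕ) < k} := by
      ext v
      constructor
      · rintro ⟨w, ⟨j, hj, rfl⟩, rfl⟩
        exact ⟨j.castSucc, by simpa using hj, rfl⟩
      · rintro ⟨i, hi, rfl⟩
        have hne : i ≠ Fin.last n := by
          intro h'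
          rw [h'] at hi
          simp only [Set.mem_setOf_eq, Fin.val_last] at hi
          omega
        refine ⟨restrict e0 (i.castPred hne), ⟨i.castPred hne, ?_, rfl⟩, ?_⟩
        · simpa using hi
        · simp [Fin.castSucc_castPred]
    rw [himg]
    exact h.1
  · intro j hj
    have h2 := h.2 j.castSucc (by simpa using hj)
    rw [← restrict_earlier G e0 j] at h2
    refine ⟨(isClique_comap_iff G _).2 h2.1, ?_⟩
    rw [← h2.2, Set.ncard_image_of_injective _ Subtype.val_injective]


lemma main (p : ℕ) : ∀ {V : Type} (k : ℕ), 1 ≤ k → ∀ (G : SimpleGraph V) (e0 : Fin p ≃ V),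
    KSO k G e0 → ∀ K : Set V, G.IsClique K → K.ncard = k →
    ∃ e : Fin p ≃ V, KSO k G e ∧ ⇑e '' {i | (i : ℕ) < k} = K := by
  induction p with
  | zero =>
    intro V k hk G e0 _ K hK hKc
    exfalso
    have hemp : IsEmpty V := Equiv.isEmpty e0.symm
    have : K = ∅ := Set.eq_empty_of_isEmpty K
    rw [this] at hKc
    simp at hKc
    omega
  | succ n IH =>
    intro V k hk G e0 h0 K hK hKc
    have hfin : Finite V := Finite.intro e0.symm
    have hkcard : k ≤ n + 1 := by
      have h1 : K.ncard ≤ (Set.univ : Set V).ncard :=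
        Set.ncard_le_ncard (Set.subset_univ K) (Set.toFinite _)
      rw [hKc, Set.ncard_univ, Nat.card_eq_of_equiv_fin e0.symm] at h1
      exact h1
    rcases eq_or_lt_of_le hkcard with hkp | hkp
    · -- k = n + 1 : K is everything
      have hKuniv : K = Set.univ := by
        apply Set.eq_of_subset_of_ncard_le (Set.subset_univ K) ?_ (Set.toFinite _)
        rw [hKc, Set.ncard_univ, Nat.card_eq_of_equiv_fin e0.symm, hkp]
      have hall : {i : Fin (n+1) | (i : ℕ) < k} = Set.univ := by
        ext i
        simp only [Set.mem_setOf_eq, Set.mem_univ, iff_true]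
        omega
      refine ⟨e0, ⟨?_, ?_⟩, ?_⟩
      · rw [hall, Set.image_univ, Equiv.range_eq_univ, ← hKuniv]
        exact hK
      · intro i hi
        exact absurd i.isLt (by omega)
      · rw [hall, Set.image_univ, Equiv.range_eq_univ, hKuniv]
    · -- k ≤ n
      have hkn : k ≤ n := by omega
      obtain ⟨hNclique, hNcard⟩ := h0.2 (Fin.last n) (by simp [hkn])
      rw [earlier_last] at hNclique hNcard
      have hKSO' := KSO_restrict h0 hkn
      by_cases hx : e0 (Fin.last n) ∈ K
      · -- x ∈ K
        set x := e0 (Fin.last n) with hxd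
        have hKx_sub : K \ {x} ⊆ G.neighborSet x := by
          rintro v ⟨hvK, hvx⟩
          simp only [Set.mem_singleton_iff] at hvx
          exact hK hx hvK (fun h => hvx h.symm)
        have hcard_Kx : (K \ {x}).ncard = k - 1 := by
          rw [Set.ncard_diff_singleton_of_mem hx, hKc]
        obtain ⟨y, hyN, hyKx⟩ : ∃ y ∈ G.neighborSet x, y ∉ K \ {x} := by
          by_contra hcon
          push_neg at hcon
          have h2 := Set.ncard_le_ncard hcon (Set.toFinite _)
          rw [hNcard, hcard_Kx] at h2
          omega
        have hyx : y ≠ x := fun h => G.irrefl (by rw [h] at hyN; exact hyN)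
        have hyK : y ∉ K := fun h => hyKx ⟨h, hyx⟩
        have hK''N : insert y (K \ {x}) ⊆ G.neighborSet x := Set.insert_subset hyN hKx_sub
        have hK''card : (insert y (K \ {x})).ncard = k := by
          rw [Set.ncard_insert_of_notMem hyKx (Set.toFinite _), hcard_Kx]
          omega
        have hNK'' : G.neighborSet x = insert y (K \ {x}) := by
          symm
          apply Set.eq_of_subset_of_ncard_le hK''N ?_ (Set.toFinite _)
          rw [hNcard, hK''card]
        have hsubne : ∀ v ∈ insert y (K \ {x}), v ≠ x := by
          intro v hv h
          exact G.irrefl (h ▸ hK''N hv)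
        have himg : Subtype.val ''
            ((Subtype.val ⁻¹' (insert y (K \ {x}))) : Set {y' : V // y' ≠ x}) =
            insert y (K \ {x}) := by
          ext v
          constructor
          · rintro ⟨w, hw, rfl⟩; exact hw
          · intro hv; exact ⟨⟨v, hsubne v hv⟩, hv, rfl⟩
        have hcliq' : (G.comap (Subtype.val : {y' : V // y' ≠ x} → V)).IsClique
            (Subtype.val ⁻¹' (insert y (K \ {x}))) := by
          rw [isClique_comap_iff, himg]
          exact hNclique.subset hK''N
        have hcard' : ((Subtype.val ⁻¹' (insert y (K \ {x}))) :
            Set {y' : V // y' ≠ x}).ncard = k := by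
          have h2 := Set.ncard_image_of_injective ((Subtype.val ⁻¹' (insert y (K \ {x}))) :
            Set {y' : V // y' ≠ x}) Subtype.val_injective
          rw [himg] at h2
          rw [← h2, hK''card]
        obtain ⟨e1, he1, he1img⟩ := IH k hk _ (restrict e0) hKSO' _ hcliq' hcard'
        have hysmem : (⟨y, hyx⟩ : {y' : V // y' ≠ x}) ∈
            (Subtype.val ⁻¹' (insert y (K \ {x})) : Set {y' : V // y' ≠ x}) := by
          show y ∈ insert y (K \ {x})
          exact Set.mem_insert y _
        rw [← he1img] at hysmem
        obtain ⟨j₀, hj₀k, hj₀⟩ := hysmem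
        simp only [Set.mem_setOf_eq] at hj₀k
        have hm1 : k - 1 < n := by omega
        set σ := Equiv.swap j₀ (⟨k-1, hm1⟩ : Fin n) with hσd
        have hσfix : ∀ j : Fin n, k ≤ (j : ℕ) → σ j = j := by
          intro j hj
          apply Equiv.swap_apply_of_ne_of_ne
          · intro h; rw [h] at hj; omega
          · intro h; rw [h] at hj; simp at hj; omega
        obtain ⟨he2, he2img⟩ := KSO_perm he1 σ hσfix
        have he2img' : ⇑(σ.trans e1) '' {i : Fin n | (i : ℕ) < k} =
            Subtype.val ⁻¹' (insert y (K \ {x})) := he2img.trans he1img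
        have he2m1 : (σ.trans e1) ⟨k-1, hm1⟩ = ⟨y, hyx⟩ := by
          show e1 (σ ⟨k-1, hm1⟩) = _
          rw [hσd, Equiv.swap_apply_right, hj₀]
        have hpre : ⇑(σ.trans e1) '' {i : Fin n | (i : ℕ) < k - 1} =
            (Subtype.val ⁻¹' (insert y (K \ {x}))) \ {(⟨y, hyx⟩ : {y' : V // y' ≠ x})} := by
          have h1 : {i : Fin n | (i : ℕ) < k - 1} =
              {i : Fin n | (i : ℕ) < k} \ {(⟨k-1, hm1⟩ : Fin n)} := by
            ext i
            simp only [Set.mem_setOf_eq, Set.mem_diff, Set.mem_singleton_iff, Fin.ext_iff]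
            omega
          rw [h1, Set.image_diff (σ.trans e1).injective, he2img', Set.image_singleton, he2m1]
        have hpreV : Subtype.val '' (⇑(σ.trans e1) '' {i : Fin n | (i : ℕ) < k - 1}) =
            K \ {x} := by
          rw [hpre, Set.image_diff Subtype.val_injective, himg, Set.image_singleton]
          show insert y (K \ {x}) \ {y} = K \ {x}
          rw [Set.insert_diff_self_of_notMem hyKx]
        set m : Fin (n+1) := ⟨k-1, by omega⟩ with hmd
        have hbK : ⇑(glue x m (σ.trans e1)) '' {i : Fin (n+1) | (i : ℕ) < k} = K := by
          ext v
          constructor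
          · rintro ⟨i, hi, rfl⟩
            simp only [Set.mem_setOf_eq] at hi
            rcases eq_or_ne i m with rfl | hne
            · rw [glue_at]; exact hx
            · obtain ⟨j, rfl⟩ := Fin.exists_succAbove_eq hne
              rw [glue_succAbove]
              have hjlt : (j : ℕ) < k - 1 := by
                rcases lt_or_ge (Fin.castSucc j) m with h4 | h4
                · have h5 := Fin.succAbove_of_castSucc_lt m j h4
                  simp only [Fin.lt_def, Fin.coe_castSucc, hmd] at h4
                  exact h4
                · have h5 := Fin.succAbove_of_le_castSucc m j h4
                  rw [h5] at hi
                  simp only [Fin.val_succ] at hi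
                  simp only [Fin.le_def, Fin.coe_castSucc, hmd] at h4
                  omega
              have hmem : (σ.trans e1) j ∈ ⇑(σ.trans e1) '' {i : Fin n | (i : ℕ) < k - 1} :=
                ⟨j, hjlt, rfl⟩
              have hmem2 : ↑((σ.trans e1) j) ∈ K \ {x} := by
                rw [← hpreV]
                exact ⟨(σ.trans e1) j, hmem, rfl⟩
              exact hmem2.1
          · intro hv
            rcases eq_or_ne v x with rfl | hvx
            · refine ⟨m, ?_, glue_at _ _ _⟩
              simp only [Set.mem_setOf_eq, hmd]
              omega
            · have hvKx : v ∈ K \ {x} := ⟨hv, hvx⟩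
              rw [← hpreV] at hvKx
              obtain ⟨w, ⟨j, hj, rfl⟩, rfl⟩ := hvKx
              simp only [Set.mem_setOf_eq] at hj
              refine ⟨m.succAbove j, ?_, by rw [glue_succAbove]⟩
              have h4 : Fin.castSucc j < m := by
                simp only [Fin.lt_def, Fin.coe_castSucc, hmd]
                omega
              rw [Fin.succAbove_of_castSucc_lt m j h4]
              simp only [Set.mem_setOf_eq, Fin.coe_castSucc]
              omega
        refine ⟨glue x m (σ.trans e1), ⟨by rw [hbK]; exact hK, ?_⟩, hbK⟩
        intro i hi
        have him : i ≠ m := by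
          intro h
          rw [h] at hi
          simp only [hmd] at hi
          omega
        obtain ⟨j, rfl⟩ := Fin.exists_succAbove_eq him
        have hcs : m ≤ Fin.castSucc j := by
          by_contra h4
          push_neg at h4
          rw [Fin.succAbove_of_castSucc_lt m j h4] at hi
          simp only [Fin.coe_castSucc] at hi
          simp only [Fin.lt_def, Fin.coe_castSucc, hmd] at h4
          omega
        have hsa : m.succAbove j = j.succ := Fin.succAbove_of_le_castSucc m j hcs
        have hjge : k - 1 ≤ (j : ℕ) := by
          simpa only [Fin.le_def, Fin.coe_castSucc, hmd] using hcs
        have hmlt : m < m.succAbove j := by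
          rw [hsa]
          simp only [Fin.lt_def, Fin.val_succ, hmd]
          omega
        by_cases hjk1 : (j : ℕ) = k - 1
        · have hjm1 : j = ⟨k-1, hm1⟩ := Fin.ext hjk1
          have hadjyx : G.Adj ↑((σ.trans e1) j) x := by
            rw [hjm1, he2m1]
            exact hyN.symm
          rw [glue_earlier_of G x m (σ.trans e1) j hmlt hadjyx]
          have hEarlier : earlierNbrs (G.comap (Subtype.val : {y' : V // y' ≠ x} → V))
              (σ.trans e1) j = ⇑(σ.trans e1) '' {i : Fin n | (i : ℕ) < k - 1} := by
            ext w
            constructor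
            · rintro ⟨j', hj', rfl, hadj⟩
              refine ⟨j', ?_, rfl⟩
              have := hj'
              rw [hjm1] at this
              simpa only [Set.mem_setOf_eq, Fin.lt_def] using this
            · rintro ⟨j', hj', rfl⟩
              simp only [Set.mem_setOf_eq] at hj'
              refine ⟨j', ?_, rfl, ?_⟩
              · rw [Fin.lt_def, hjk1]
                omega
              · show G.Adj ↑((σ.trans e1) j) ↑((σ.trans e1) j')
                rw [hjm1, he2m1]
                have hmemj' : ↑((σ.trans e1) j') ∈ K \ {x} := by
                  rw [← hpreV]
                  exact ⟨(σ.trans e1) j', ⟨j', hj', rfl⟩, rfl⟩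
                have hne2 : y ≠ ↑((σ.trans e1) j') := by
                  intro h
                  exact hyKx (h ▸ hmemj')
                exact hNclique hyN (hKx_sub hmemj') hne2
          rw [hEarlier, hpreV]
          have h6 : insert x (K \ {x}) = K := by
            rw [Set.insert_diff_singleton]
            exact Set.insert_eq_self.2 hx
          rw [h6]
          exact ⟨hK, hKc⟩
        · have hjk : k ≤ (j : ℕ) := by omega
          obtain ⟨hc, hn⟩ := he2.2 j hjk
          have hnadj : ¬ G.Adj ↑((σ.trans e1) j) x := by
            intro hadj
            have h1 : ↑((σ.trans e1) j) ∈ G.neighborSet x := hadj.symm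
            rw [hNK''] at h1
            have h2 : (σ.trans e1) j ∈
                (Subtype.val ⁻¹' (insert y (K \ {x})) : Set {y' : V // y' ≠ x}) := h1
            rw [← he2img'] at h2
            obtain ⟨j', hj', hje⟩ := h2
            have h3 := (σ.trans e1).injective hje
            rw [h3] at hj'
            simp only [Set.mem_setOf_eq] at hj'
            omega
          rw [glue_earlier_of_not G x m (σ.trans e1) j (fun hc2 => hnadj hc2.2)]
          exact ⟨(isClique_comap_iff G _).1 hc,
            by rw [Set.ncard_image_of_injective _ Subtype.val_injective]; exact hn⟩
      · -- x ∉ K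
        have hKS : ∀ v ∈ K, v ≠ e0 (Fin.last n) := fun v hv h => hx (h ▸ hv)
        have himg : Subtype.val '' ((Subtype.val ⁻¹' K : Set {y : V // y ≠ e0 (Fin.last n)})) = K := by
          ext v
          constructor
          · rintro ⟨w, hw, rfl⟩; exact hw
          · intro hv; exact ⟨⟨v, hKS v hv⟩, hv, rfl⟩
        have hcliq' : (G.comap (Subtype.val : {y : V // y ≠ e0 (Fin.last n)} → V)).IsClique
            (Subtype.val ⁻¹' K) := by
          rw [isClique_comap_iff, himg]; exact hK
        have hcard' : (Subtype.val ⁻¹' K : Set {y : V // y ≠ e0 (Fin.last n)}).ncard = k := by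
          have h2 := Set.ncard_image_of_injective (Subtype.val ⁻¹' K :
            Set {y : V // y ≠ e0 (Fin.last n)}) Subtype.val_injective
          rw [himg] at h2
          rw [← h2, hKc]
        obtain ⟨e1, he1, he1img⟩ := IH k hk _ (restrict e0) hKSO' _ hcliq' hcard'
        have hbasis : ⇑(glue (e0 (Fin.last n)) (Fin.last n) e1) '' {i : Fin (n+1) | (i : ℕ) < k} =
            Subtype.val '' (⇑e1 '' {j : Fin n | (j : ℕ) < k}) := by
          ext v
          constructor
          · rintro ⟨i, hi, rfl⟩
            have hne : i ≠ Fin.last n := by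
              intro h
              rw [h] at hi
              simp only [Set.mem_setOf_eq, Fin.val_last] at hi
              omega
            have hsa : (Fin.last n).succAbove (i.castPred hne) = i := by
              rw [Fin.succAbove_last, Fin.castSucc_castPred]
            refine ⟨e1 (i.castPred hne), ⟨i.castPred hne, by simpa using hi, rfl⟩, ?_⟩
            have h3 := glue_succAbove (e0 (Fin.last n)) (Fin.last n) e1 (i.castPred hne)
            rw [hsa] at h3
            exact h3.symm
          · rintro ⟨w, ⟨j, hj, rfl⟩, rfl⟩
            refine ⟨(Fin.last n).succAbove j, ?_, by rw [glue_succAbove]⟩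
            rw [Fin.succAbove_last]
            simpa using hj
        have hbK : ⇑(glue (e0 (Fin.last n)) (Fin.last n) e1) '' {i : Fin (n+1) | (i : ℕ) < k} = K := by
          rw [hbasis, he1img, himg]
        refine ⟨glue (e0 (Fin.last n)) (Fin.last n) e1, ⟨?_, ?_⟩, hbK⟩
        · rw [hbK]; exact hK
        · intro i hi
          by_cases hil : i = Fin.last n
          · subst hil
            have h1 : earlierNbrs G (glue (e0 (Fin.last n)) (Fin.last n) e1) (Fin.last n) =
                G.neighborSet (e0 (Fin.last n)) := by
              rw [earlier_last, glue_at]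
            rw [h1]
            exact ⟨hNclique, hNcard⟩
          · obtain ⟨j, rfl⟩ := Fin.exists_succAbove_eq hil
            have hjk : k ≤ (j : ℕ) := by
              have hv : (((Fin.last n).succAbove j : Fin (n+1)) : ℕ) = (j : ℕ) := by
                rw [Fin.succAbove_last]; rfl
              omega
            have hne : ¬ ((Fin.last n) < (Fin.last n).succAbove j ∧
                G.Adj ↑(e1 j) (e0 (Fin.last n))) := by
              rintro ⟨h1, _⟩
              exact absurd h1 (not_lt.2 (Fin.le_last _))
            rw [glue_earlier_of_not G _ _ e1 j hne]
            obtain ⟨hc, hn⟩ := he1.2 j hjk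
            exact ⟨(isClique_comap_iff G _).1 hc,
              by rw [Set.ncard_image_of_injective _ Subtype.val_injective]; exact hn⟩

end KTreeAux

/-- Any `k`-clique `K` of a `k`-tree `G` (`k ≥ 1`) can be taken as the basis of a
`k`-simplicial ordering of `G`: there is a `k`-simplicial ordering whose first `k`
vertices are exactly the vertices of `K`. -/
theorem ktree_any_clique_basis {V : Type} [Fintype V] (k : ℕ) (hk : 1 ≤ k)
    (G : SimpleGraph V) (hG : IsKTree k G)
    (K : Set V) (hK : G.IsClique K) (hKcard : K.ncard = k) :
    ∃ e : Fin (Fintype.card V) ≃ V,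
      IsKSimplicialOrdering k G e ∧ ⇑e '' {i | (i : ℕ) < k} = K := by
  obtain ⟨hle, e0, h0⟩ := hG
  obtain ⟨e, he, himg⟩ := KTreeAux.main (Fintype.card V) k hk G e0 h0 K hK hKcard
  exact ⟨e, he, himg⟩
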